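/- Let p, q, u, v ∈ ℂ with p ≠ 0, q ≠ 0, u ≠ 0, v ≠ 0, u ≠ v and pu − qv ≠ 0, and define U = (v/p)(pu − qv)/(u − v) and V = (u/q)(pu − qv)/(u − v) (the map F_III). Then U ≠ 0 and V ≠ 0, and −1/(pU) = −(1/v)(u − v)/(pu − qv) and −1/(qV) = −(1/u)(u − v)/(pu − qv); hence the change of variables (U,V,u,v) ↦ (−1/(pU), −1/(qV), u, v) transforms the map F_III into the map cH_III^B with the same parameters (p,q). -/

import Mathlib

/-- The change (U,V,u,v) ↦ (−1/(pU), −1/(qV), u, v) transforms F_III into cH_III^B. -/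
theorem stmt_13 (p q u v U V : ℂ) (hp : p ≠ 0) (hq : q ≠ 0)
    (hu : u ≠ 0) (hv : v ≠ 0) (huv : u ≠ v) (hpq : p * u - q * v ≠ 0)
    (hU : U = v / p * (p * u - q * v) / (u - v))
    (hV : V = u / q * (p * u - q * v) / (u - v)) :
    U ≠ 0 ∧ V ≠ 0 ∧
    -(1 / (p * U)) = -(1 / v) * ((u - v) / (p * u - q * v)) ∧
    -(1 / (q * V)) = -(1 / u) * ((u - v) / (p * u - q * v)) := by
  have huv' : u - v ≠ 0 := sub_ne_zero.mpr huv
  subst hU hV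
  refine ⟨div_ne_zero (mul_ne_zero (div_ne_zero hv hp) hpq) huv', div_ne_zero (mul_ne_zero (div_ne_zero hu hq) hpq) huv', ?_, ?_⟩ <;> field_simp <;> ring
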